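/- Let α be a composition of size N and let μ range over partitions of N. Then in the Schur expansion r_α = Σ_μ c_{α,μ} s_μ, the coefficient of s_{λ(α)} equals 1, and c_{α,μ} = 0 for every partition μ of N with μ <_lex λ(α); that is, r_α = s_{λ(α)} + Σ_{μ >_lex λ(α)} b_μ s_μ for some nonnegative integers b_μ. -/

import Mathlib

namespace RibbonNearEq

/-- A composition is a finite sequence of positive integers. -/
def IsComposition (α : List ℕ) : Prop := ∀ x ∈ α, 0 < x

/-- A partition is a weakly decreasing finite sequence of positive integers. -/
def IsPartitionList (ν : List ℕ) : Prop :=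
  ν.Pairwise (· ≥ ·) ∧ ∀ x ∈ ν, 0 < x

/-- The content of a tableau (given as its list of rows), as a monomial exponent
function: `contents T v` is the number of entries of `T` equal to `v`. -/
def contents (T : List (List ℕ)) : ℕ → ℕ := fun v => T.flatten.count v

/-- The rows of `T` have the lengths prescribed by the shape `sh`. -/
def RowsMatch (sh : List ℕ) (T : List (List ℕ)) : Prop :=
  T.length = sh.length ∧ ∀ i < T.length, (T.getD i []).length = sh.getD i 0

/-- Every row consists of positive integers and is weakly increasing. -/
def RowsSemistandard (T : List (List ℕ)) : Prop :=
  ∀ row ∈ T, row.Pairwise (· ≤ ·) ∧ ∀ x ∈ row, 0 < x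

/-- A semistandard Young tableau of (left-justified) partition shape `ν`:
rows weakly increase left to right, columns strictly increase top to bottom. -/
def IsSSYT (ν : List ℕ) (T : List (List ℕ)) : Prop :=
  RowsMatch ν T ∧ RowsSemistandard T ∧
  ∀ i, i + 1 < T.length → ∀ j < (T.getD (i + 1) []).length,
    (T.getD i []).getD j 0 < (T.getD (i + 1) []).getD j 0

/-- A semistandard Young tableau of ribbon shape `α` (rows listed from top to
bottom, the rightmost cell of row `i+1` directly below the leftmost cell of row
`i`): rows weakly increase, and the leftmost entry of row `i` is strictly less
than the rightmost entry of row `i+1` (the two-cell columns strictly increase). -/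
def IsRibbonSSYT (α : List ℕ) (T : List (List ℕ)) : Prop :=
  RowsMatch α T ∧ RowsSemistandard T ∧
  ∀ i, i + 1 < T.length →
    (T.getD i []).headI < (T.getD (i + 1) []).getLastD 0

/-- The Schur function `s_ν`, encoded by its monomial coefficient function: the
coefficient of `x_1^{m 1} x_2^{m 2} ⋯` is the number of SSYT of shape `ν` and
content `m`. -/
noncomputable def schur (ν : List ℕ) : (ℕ → ℕ) → ℤ :=
  fun m => (Set.ncard {T : List (List ℕ) | IsSSYT ν T ∧ contents T = m} : ℤ)

/-- The ribbon Schur function `r_α`, encoded by its monomial coefficient function. -/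
noncomputable def ribbon (α : List ℕ) : (ℕ → ℕ) → ℤ :=
  fun m => (Set.ncard {T : List (List ℕ) | IsRibbonSSYT α T ∧ contents T = m} : ℤ)

/-- The reading word of a tableau: entries read right to left, top to bottom. -/
def readingWord (T : List (List ℕ)) : List ℕ := (T.map List.reverse).flatten

/-- Lattice word: every initial segment contains at least as many `i`'s as
`(i+1)`'s, for every `i ≥ 1`. -/
def IsLatticeWord (w : List ℕ) : Prop :=
  ∀ n i : ℕ, (w.take n).count (i + 2) ≤ (w.take n).count (i + 1)

/-- A Littlewood–Richardson tableau of ribbon shape `α`. -/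
def IsLR (α : List ℕ) (T : List (List ℕ)) : Prop :=
  IsRibbonSSYT α T ∧ IsLatticeWord (readingWord T)

/-- The monomial exponent function associated to a partition list `ν`. -/
def monoOf (ν : List ℕ) : ℕ → ℕ :=
  fun v => if v = 0 then 0 else ν.getD (v - 1) 0

/-- The Littlewood–Richardson coefficient `c_{α,ν}`: the number of LR tableaux
of ribbon shape `α` and content `ν`. -/
noncomputable def lrCoeff (α ν : List ℕ) : ℕ :=
  Set.ncard {T : List (List ℕ) | IsLR α T ∧ contents T = monoOf ν}

/-- Strict lexicographic order on partitions, padded with zeros. -/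
def LexLtList (μ ν : List ℕ) : Prop :=
  ∃ i, (∀ i' < i, μ.getD i' 0 = ν.getD i' 0) ∧ μ.getD i 0 < ν.getD i 0


section Helpers
open List

/-! ### basic list lemmas -/

lemma headI_mem {l : List ℕ} (h : l ≠ []) : l.headI ∈ l := by
  cases l with
  | nil => simp at h
  | cons a t => simp

lemma take_sum_succ (l : List ℕ) (n : ℕ) :
    (l.take (n+1)).sum = (l.take n).sum + l.getD n 0 := by
  induction l generalizing n with
  | nil => simp
  | cons a t ih =>
    cases n with
    | zero => simp
    | succ m => simp only [take_succ_cons, sum_cons, getD_cons_succ, ih m]; omega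

lemma range_map_getD_sum (l : List ℕ) (k : ℕ) :
    (((List.range k).map (fun i => l.getD i 0)).sum) = (l.take k).sum := by
  induction k with
  | zero => simp
  | succ m ih => rw [range_succ, map_append, sum_append, ih, take_sum_succ]; simp

lemma sum_map_le {β : Type*} (l : List β) (f g : β → ℕ) (h : ∀ i ∈ l, f i ≤ g i) :
    (l.map f).sum ≤ (l.map g).sum := by
  induction l with
  | nil => simp
  | cons a t ih =>
    simp only [map_cons, sum_cons]
    have := h a (by simp)
    have := ih (fun i hi => h i (by simp [hi]))
    omega

lemma sorted_getD_succ_le {l : List ℕ} (h : l.Pairwise (· ≥ ·)) (i : ℕ) :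
    l.getD (i+1) 0 ≤ l.getD i 0 := by
  induction l generalizing i with
  | nil => simp
  | cons a t ih =>
    cases i with
    | zero =>
      cases t with
      | nil => simp
      | cons b t' =>
        have : a ≥ b := rel_of_pairwise_cons h (by simp)
        simpa using this
    | succ m => simpa using ih h.of_cons m

lemma mem_le_getLastD {l : List ℕ} (h : l.Pairwise (· ≤ ·)) {y : ℕ} (hy : y ∈ l) :
    y ≤ l.getLastD 0 := by
  induction l generalizing y with
  | nil => simp at hy
  | cons a t ih =>
    cases t with
    | nil => simp at hy ⊢; omega
    | cons b t' =>
      rcases mem_cons.mp hy with rfl | hyt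
      · have hb : y ≤ b := rel_of_pairwise_cons h (by simp)
        have : b ≤ (b :: t').getLastD 0 := ih h.of_cons (by simp)
        calc y ≤ b := hb
          _ ≤ _ := this
      · exact ih h.of_cons hyt



def cLE (k : ℕ) (w : List ℕ) : ℕ := ((List.range k).map (fun i => w.count (i+1))).sum
def cGT (k : ℕ) (w : List ℕ) : ℕ := (w.filter (fun x => decide (k < x))).length

lemma cLE_zero (w : List ℕ) : cLE 0 w = 0 := by simp [cLE]

lemma cLE_succ (k : ℕ) (w : List ℕ) : cLE (k+1) w = cLE k w + w.count (k+1) := by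
  simp [cLE, range_succ]

lemma cLE_append (k : ℕ) (u v : List ℕ) : cLE k (u ++ v) = cLE k u + cLE k v := by
  induction k with
  | zero => simp [cLE_zero]
  | succ m ih => simp only [cLE_succ, ih, count_append]; omega

lemma cGT_succ (k : ℕ) (w : List ℕ) : cGT k w = cGT (k+1) w + w.count (k+1) := by
  induction w with
  | nil => simp [cGT]
  | cons a t ih =>
    rcases Nat.lt_trichotomy a (k+1) with h | h | h
    · have h1 : ¬ (k < a) := by omega
      have h2 : ¬ (k+1 < a) := by omega
      have h3 : ¬ (a = k+1) := by omega
      simp only [cGT, filter_cons, count_cons] at *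
      simp [h1, h2, h3, ih]
    · have h1 : (k < a) := by omega
      have h2 : ¬ (k+1 < a) := by omega
      simp only [cGT, filter_cons, count_cons] at *
      simp [h1, h2, h, ih]
      omega
    · have h1 : (k < a) := by omega
      have h3 : ¬ (a = k+1) := by omega
      simp only [cGT, filter_cons, count_cons] at *
      simp [h1, h, h3, ih]
      omega

lemma cGT_zero_of_pos (w : List ℕ) (h : ∀ y ∈ w, 0 < y) : cGT 0 w = w.length := by
  unfold cGT
  rw [List.filter_eq_self.mpr]
  intro a ha; simpa using h a ha

lemma cGT_eq_zero (k : ℕ) (w : List ℕ) (h : ∀ y ∈ w, y ≤ k) : cGT k w = 0 := by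
  unfold cGT
  rw [List.filter_eq_nil_iff.mpr, length_nil]
  intro a ha; have := h a ha; simp; omega

lemma cGT_add_cLE (k : ℕ) (w : List ℕ) (h : ∀ y ∈ w, 0 < y) :
    cGT k w + cLE k w = w.length := by
  induction k with
  | zero => simp [cLE_zero, cGT_zero_of_pos w h]
  | succ m ih =>
    have := cGT_succ m w
    rw [cLE_succ]; omega

lemma cLE_le_length (k : ℕ) (w : List ℕ) (h : ∀ y ∈ w, 0 < y) : cLE k w ≤ w.length := by
  have := cGT_add_cLE k w h; omega

lemma cLE_all (k : ℕ) (w : List ℕ) (h : ∀ y ∈ w, 0 < y ∧ y ≤ k) : cLE k w = w.length := by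
  have h1 := cGT_add_cLE k w (fun y hy => (h y hy).1)
  have h2 := cGT_eq_zero k w (fun y hy => (h y hy).2)
  omega

/-! ### lattice basics -/

lemma latticeCount {w : List ℕ} (hw : IsLatticeWord w) (i : ℕ) :
    w.count (i+2) ≤ w.count (i+1) := by
  have := hw w.length i
  simpa using this

lemma take_append_lattice {u v : List ℕ} (h : IsLatticeWord (u ++ v)) : IsLatticeWord u := by
  intro n i
  rcases le_or_gt n u.length with hn | hn
  · have := h n i
    rw [take_append, Nat.sub_eq_zero_of_le hn, take_zero, append_nil] at this
    exact this
  · have := h u.length i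
    rw [take_append, Nat.sub_self, take_zero, append_nil, take_length] at this
    rw [take_of_length_le (le_of_lt hn)]
    exact this

lemma dropWhile_lt {b : List ℕ} (hb : b.Pairwise (· ≥ ·)) (v : ℕ) :
    ∀ y ∈ b.dropWhile (fun z => decide (v ≤ z)), y < v := by
  induction b with
  | nil => simp
  | cons a t ih =>
    rw [dropWhile_cons]
    by_cases h : v ≤ a
    · simp only [h, decide_eq_true h, if_true]
      exact ih hb.of_cons
    · simp only [decide_eq_false h, Bool.false_eq_true, if_false]
      intro y hy
      rcases mem_cons.mp hy with rfl | hyt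
      · omega
      · have : a ≥ y := rel_of_pairwise_cons hb hyt
        omega

/-- key single-letter lattice consequence -/
lemma S4 {w b : List ℕ} (hl : IsLatticeWord (w ++ b)) (hb : b.Pairwise (· ≥ ·))
    (i : ℕ) (hc : 0 < b.count (i+2)) :
    w.count (i+2) + b.count (i+2) ≤ w.count (i+1) := by
  set p : ℕ → Bool := fun z => decide (i+2 ≤ z) with hp
  set t := b.takeWhile p with ht
  set d := b.dropWhile p with hd
  have hsplit : t ++ d = b := takeWhile_append_dropWhile (p := p) (l := b)
  have htc : t.count (i+2) = b.count (i+2) := by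
    have hdc : d.count (i+2) = 0 := by
      rw [count_eq_zero]
      intro hmem
      have := dropWhile_lt hb (i+2) (i+2) hmem
      omega
    rw [← hsplit, count_append]; omega
  have htc1 : t.count (i+1) = 0 := by
    rw [count_eq_zero]
    intro hmem
    have := mem_takeWhile_imp hmem
    simp [hp] at this
  have hkey := hl (w.length + t.length) (i)
  have htake : (w ++ b).take (w.length + t.length) = w ++ t := by
    rw [← hsplit]
    rw [show w ++ (t ++ d) = (w ++ t) ++ d by simp]
    have : w.length + t.length = (w ++ t).length := by simp
    rw [this, take_left]
  rw [htake, count_append, count_append] at hkey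
  omega

lemma le_foldr_max (b : List ℕ) : ∀ y ∈ b, y ≤ b.foldr max 0 := by
  induction b with
  | nil => simp
  | cons a t ih =>
    intro y hy
    rcases mem_cons.mp hy with rfl | hyt
    · simp [le_max_iff]
    · simp only [foldr_cons]
      have := ih y hyt
      omega

lemma KB {w b : List ℕ} (hl : IsLatticeWord (w ++ b)) (hb : b.Pairwise (· ≥ ·)) (k : ℕ)
    (hk : 1 ≤ k) : cGT k b ≤ w.count k := by
  obtain ⟨d, hd⟩ : ∃ d, ∀ y ∈ b, y ≤ k + d :=
    ⟨b.foldr max 0, fun y hy => le_trans (le_foldr_max b y hy) (by omega)⟩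
  induction d generalizing k with
  | zero => rw [cGT_eq_zero k b (fun y hy => by have := hd y hy; omega)]; omega
  | succ m ih =>
    have step : cGT k b = cGT (k+1) b + b.count (k+1) := cGT_succ k b
    have h1 : cGT (k+1) b ≤ w.count (k+1) :=
      ih (k+1) (by omega) (fun y hy => by have := hd y hy; omega)
    have h2 : w.count (k+1) + b.count (k+1) ≤ w.count k := by
      obtain ⟨k', rfl⟩ : ∃ k', k = k' + 1 := ⟨k-1, by omega⟩
      have h5 : k' + 1 + 1 = k' + 2 := by omega
      rcases Nat.eq_zero_or_pos (b.count (k'+1+1)) with hz | hpos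
      · have hw : IsLatticeWord w := take_append_lattice hl
        have h4 := latticeCount hw k'
        rw [h5] at hz ⊢
        omega
      · rw [h5] at hpos ⊢
        exact S4 hl hb k' hpos
    omega



/-! ### sorting -/

def sortD (l : List ℕ) : List ℕ := l.insertionSort (· ≥ ·)

lemma sortD_sorted (l : List ℕ) : (sortD l).Pairwise (· ≥ ·) :=
  pairwise_insertionSort _ l

lemma sortD_perm (l : List ℕ) : sortD l ~ l := perm_insertionSort _ l

lemma sortD_length (l : List ℕ) : (sortD l).length = l.length := (sortD_perm l).length_eq

lemma sortD_sum (l : List ℕ) : (sortD l).sum = l.sum := (sortD_perm l).sum_eq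

lemma sortD_eq_of_perm_sorted {l m : List ℕ} (h : m ~ l) (hs : m.Pairwise (· ≥ ·)) :
    m = sortD l :=
  Perm.eq_of_pairwise (fun _ _ _ _ h1 h2 => by omega) hs (sortD_sorted l) (h.trans (sortD_perm l).symm)

lemma sortD_snoc (l : List ℕ) (x : ℕ) :
    sortD (l ++ [x]) = (sortD l).orderedInsert (· ≥ ·) x := by
  symm
  apply sortD_eq_of_perm_sorted
  · exact (perm_orderedInsert _ x _).trans ((sortD_perm l).cons x |>.trans (perm_append_singleton x l).symm)
  · exact (sortD_sorted l).orderedInsert x _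

/-- the take/drop decomposition of an ordered insertion into a sorted-desc list -/
lemma oi_decomp (s : List ℕ) (x : ℕ) :
    ∃ t d : List ℕ, s.orderedInsert (· ≥ ·) x = t ++ x :: d ∧ s = t ++ d := by
  refine ⟨s.takeWhile (fun b => decide ¬ (x ≥ b)), s.dropWhile (fun b => decide ¬ (x ≥ b)),
    orderedInsert_eq_take_drop _ x s, (takeWhile_append_dropWhile (l := s)).symm⟩

lemma d_le_x {s : List ℕ} (hs : s.Pairwise (· ≥ ·)) (x : ℕ) :
    ∀ y ∈ s.dropWhile (fun b => decide ¬ (x ≥ b)), y ≤ x := by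
  induction s with
  | nil => simp
  | cons a t ih =>
    rw [dropWhile_cons]
    by_cases h : x ≥ a
    · have : (decide ¬ (x ≥ a)) = false := by simp [h]
      rw [this]
      simp only [Bool.false_eq_true, if_false]
      intro y hy
      rcases mem_cons.mp hy with rfl | hyt
      · exact h
      · exact le_trans (rel_of_pairwise_cons hs hyt) h
    · have : (decide ¬ (x ≥ a)) = true := by simp [h]
      rw [this]
      simp only [if_true]
      exact ih hs.of_cons

/-- decomposition with the needed side facts -/
lemma oi_decomp' {s : List ℕ} (hs : s.Pairwise (· ≥ ·)) (x : ℕ) :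
    ∃ t d : List ℕ, s.orderedInsert (· ≥ ·) x = t ++ x :: d ∧ s = t ++ d ∧
      (∀ y ∈ d, y ≤ x) ∧ d.Pairwise (· ≥ ·) := by
  refine ⟨s.takeWhile (fun b => decide ¬ (x ≥ b)), s.dropWhile (fun b => decide ¬ (x ≥ b)),
    orderedInsert_eq_take_drop _ x s, (takeWhile_append_dropWhile (l := s)).symm,
    d_le_x hs x, hs.sublist (dropWhile_sublist _)⟩

lemma F1 (t d : List ℕ) (x k : ℕ) (hk : k ≤ t.length) :
    ((t ++ x :: d).take k).sum = ((t ++ d).take k).sum := by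
  rw [take_append, take_append,
    Nat.sub_eq_zero_of_le hk, take_zero, take_zero]

lemma F2 (t d : List ℕ) (x k : ℕ) (hk : t.length ≤ k) :
    ((t ++ x :: d).take (k+1)).sum = x + ((t ++ d).take k).sum := by
  rw [take_append, take_append]
  rw [take_of_length_le (by omega), take_of_length_le hk]
  have h1 : k + 1 - t.length = (k - t.length) + 1 := by omega
  rw [h1, take_succ_cons, sum_append, sum_append, sum_cons]
  omega

/-- pointwise bound: sorted list is pointwise ≤ its ordered insertion -/
lemma PW1 {s : List ℕ} (hs : s.Pairwise (· ≥ ·)) (x i : ℕ) :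
    s.getD i 0 ≤ (s.orderedInsert (· ≥ ·) x).getD i 0 := by
  obtain ⟨t, d, he, hsd, hdx, hd⟩ := oi_decomp' hs x
  rw [he, hsd]
  rcases lt_or_ge i t.length with hi | hi
  · rw [getD_append _ _ _ _ hi, getD_append _ _ _ _ hi]
  · rw [getD_append_right _ _ _ _ hi, getD_append_right _ _ _ _ hi]
    set j := i - t.length
    cases hj : j with
    | zero =>
      cases d with
      | nil => simp
      | cons y d' =>
        simp only [getD_cons_zero]
        exact hdx y (by simp)
    | succ m =>
      have : (x :: d).getD (m+1) 0 = d.getD m 0 := by simp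
      rw [this]
      exact sorted_getD_succ_le hd m

/-- shifted pointwise bound: insertion at index `i+1` is ≤ old value at `i` -/
lemma PW2 {s : List ℕ} (hs : s.Pairwise (· ≥ ·)) (x i : ℕ) :
    (s.orderedInsert (· ≥ ·) x).getD (i+1) 0 ≤ s.getD i 0 := by
  obtain ⟨t, d, he, hsd, hdx, hd⟩ := oi_decomp' hs x
  rcases lt_or_ge i t.length with hi | hi
  · have h1 : (s.orderedInsert (· ≥ ·) x).getD (i+1) 0 ≤ (s.orderedInsert (· ≥ ·) x).getD i 0 :=
      sorted_getD_succ_le (hs.orderedInsert x _) i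
    have h2 : (s.orderedInsert (· ≥ ·) x).getD i 0 = s.getD i 0 := by
      rw [he, hsd, getD_append _ _ _ _ hi, getD_append _ _ _ _ hi]
    omega
  · rw [he, hsd, getD_append_right _ _ _ _ (by omega : t.length ≤ i + 1),
      getD_append_right _ _ _ _ hi]
    have h1 : i + 1 - t.length = (i - t.length) + 1 := by omega
    rw [h1]
    simp


/-! ### dominance (Claim C) -/

lemma claimC : ∀ (L : List (List ℕ)),
    (∀ b ∈ L, b.Pairwise (· ≥ ·)) → (∀ b ∈ L, ∀ y ∈ b, 0 < y) →
    IsLatticeWord L.flatten →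
    ∀ k, ((sortD (L.map List.length)).take k).sum ≤ cLE k L.flatten := by
  intro L
  induction L using List.reverseRecOn with
  | nil => intro _ _ _ k; simp [sortD]
  | append_singleton L' b ih =>
    intro hsort hpos hlat k
    have hsort' : ∀ c ∈ L', c.Pairwise (· ≥ ·) := fun c hc => hsort c (by simp [hc])
    have hpos' : ∀ c ∈ L', ∀ y ∈ c, 0 < y := fun c hc => hpos c (by simp [hc])
    have hb : b.Pairwise (· ≥ ·) := hsort b (by simp)
    have hbpos : ∀ y ∈ b, 0 < y := hpos b (by simp)
    have hflat : (L' ++ [b]).flatten = L'.flatten ++ b := by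
      rw [flatten_append]; simp
    rw [hflat] at hlat ⊢
    have hlat' : IsLatticeWord L'.flatten := take_append_lattice hlat
    have ihk := ih hsort' hpos' hlat'
    set w := L'.flatten with hw
    set lam' := sortD (L'.map List.length) with hlam'
    have hmap : (L' ++ [b]).map List.length = L'.map List.length ++ [b.length] := by simp
    rw [hmap, sortD_snoc]
    obtain ⟨t, d, he, hsd, hdx, hd⟩ := oi_decomp' (sortD_sorted (L'.map List.length)) b.length
    rw [he]
    rw [cLE_append]
    rcases le_or_gt k t.length with hk | hk
    · rw [← hlam'] at hsd
      rw [F1 t d _ k hk, ← hsd]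
      have := ihk k
      omega
    · obtain ⟨k', rfl⟩ : ∃ k', k = k' + 1 := ⟨k-1, by omega⟩
      rw [← hlam'] at hsd
      rw [F2 t d _ k' (by omega), ← hsd]
      have h1 := ihk k'
      have h2 : cGT (k'+1) b ≤ w.count (k'+1) := KB hlat hb (k'+1) (by omega)
      have h3 : cGT (k'+1) b + cLE (k'+1) b = b.length := cGT_add_cLE _ _ hbpos
      have h4 : cLE (k'+1) w = cLE k' w + w.count (k'+1) := cLE_succ _ _
      omega

/-- letters are bounded by the number of blocks -/
lemma LB : ∀ (L : List (List ℕ)),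
    (∀ b ∈ L, b.Pairwise (· ≥ ·)) → IsLatticeWord L.flatten →
    ∀ y ∈ L.flatten, y ≤ L.length := by
  intro L
  induction L using List.reverseRecOn with
  | nil => simp
  | append_singleton L' b ih =>
    intro hsort hlat y hy
    have hsort' : ∀ c ∈ L', c.Pairwise (· ≥ ·) := fun c hc => hsort c (by simp [hc])
    have hb : b.Pairwise (· ≥ ·) := hsort b (by simp)
    have hflat : (L' ++ [b]).flatten = L'.flatten ++ b := by
      rw [flatten_append]; simp
    rw [hflat] at hlat hy
    have hlat' : IsLatticeWord L'.flatten := take_append_lattice hlat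
    have ih' := ih hsort' hlat'
    have hlen : (L' ++ [b]).length = L'.length + 1 := by simp
    rw [hlen]
    rcases mem_append.mp hy with hyw | hyb
    · have := ih' y hyw; omega
    · -- y in b; bound the head of b
      cases b with
      | nil => simp at hyb
      | cons f rest =>
        have hyf : y ≤ f := by
          rcases mem_cons.mp hyb with rfl | hyt
          · exact le_refl y
          · exact rel_of_pairwise_cons hb hyt
        by_contra hcon
        push_neg at hcon
        have hf : L'.length + 2 ≤ f := by omega
        obtain ⟨i, hi⟩ : ∃ i, f = i + 2 := ⟨f - 2, by omega⟩
        have hkey := hlat (L'.flatten.length + 1) i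
        have htake : (L'.flatten ++ f :: rest).take (L'.flatten.length + 1)
            = L'.flatten ++ [f] := by
          rw [take_append, take_of_length_le (by omega),
            Nat.add_sub_cancel_left]
          simp
        rw [htake, count_append, count_append] at hkey
        have hc1 : L'.flatten.count (i+2) = 0 := by
          rw [count_eq_zero]
          intro hmem
          have := ih' _ hmem
          omega
        have hc2 : L'.flatten.count (i+1) = 0 := by
          rw [count_eq_zero]
          intro hmem
          have := ih' _ hmem
          omega
        have hc3 : [f].count (i+2) = 1 := by rw [hi]; simp
        have hc4 : [f].count (i+1) = 0 := by
          rw [count_eq_zero]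
          intro hmem
          simp at hmem
          omega
        omega

/-- appending a block whose full counts satisfy the chain condition keeps latticehood -/
lemma latAppend {w b : List ℕ} (hw : IsLatticeWord w)
    (h : ∀ i, w.count (i+2) + b.count (i+2) ≤ w.count (i+1)) :
    IsLatticeWord (w ++ b) := by
  intro n i
  rw [take_append]
  rcases le_or_gt n w.length with hn | hn
  · rw [Nat.sub_eq_zero_of_le hn, take_zero, append_nil]
    exact hw n i
  · rw [take_of_length_le (by omega)]
    rw [count_append, count_append]
    set t := b.take (n - w.length)
    have ht2 : t.count (i+2) ≤ b.count (i+2) := (take_sublist _ _).count_le _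
    have hh := h i
    have hw' := latticeCount hw i
    omega

/-- counting in the reading word equals counting in the flatten -/
lemma rwCount (T : List (List ℕ)) (v : ℕ) :
    ((T.map List.reverse).flatten).count v = (T.flatten).count v := by
  induction T with
  | nil => simp
  | cons r T' ih => simp [count_append, ih]


/-! ### the canonical filling -/

def rowCore (n : ℕ) (c : ℕ → ℕ) : List ℕ :=
  ((List.range n).map (fun i => List.replicate (c i) (i+1))).flatten

lemma rc_mem (n : ℕ) (c : ℕ → ℕ) : ∀ y ∈ rowCore n c, 1 ≤ y ∧ y ≤ n := by
  induction n with
  | zero => simp [rowCore]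
  | succ m ih =>
    intro y hy
    rw [rowCore, range_succ, map_append, flatten_append] at hy
    rcases mem_append.mp hy with h | h
    · have := ih y h
      omega
    · simp only [map_cons, map_nil, flatten_cons, flatten_nil, append_nil] at h
      have := eq_of_mem_replicate h
      omega

lemma rc_sorted (n : ℕ) (c : ℕ → ℕ) : (rowCore n c).Pairwise (· ≤ ·) := by
  induction n with
  | zero => simp [rowCore]
  | succ m ih =>
    rw [rowCore, range_succ, map_append, flatten_append]
    rw [pairwise_append]
    refine ⟨ih, ?_, ?_⟩
    · simp only [map_cons, map_nil, flatten_cons, flatten_nil, append_nil]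
      exact pairwise_replicate.mpr (Or.inr le_rfl)
    · intro a ha b hb
      simp only [map_cons, map_nil, flatten_cons, flatten_nil, append_nil] at hb
      have h1 := rc_mem m c a ha
      have h2 := eq_of_mem_replicate hb
      omega


lemma rc_count (n : ℕ) (c : ℕ → ℕ) (v : ℕ) :
    (rowCore n c).count (v+1) = if v < n then c v else 0 := by
  induction n with
  | zero => simp [rowCore]
  | succ m ih =>
    rw [rowCore, range_succ, map_append, flatten_append, count_append]
    rw [← rowCore, ih]
    simp only [map_cons, map_nil, flatten_cons, flatten_nil, append_nil]
    rw [count_replicate]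
    rcases Nat.lt_trichotomy v m with h | h | h
    · have h1 : ¬ (m = v) := by omega
      simp [h, h1, show v < m + 1 by omega]
    · subst h
      simp [show ¬ (v < v) by omega, show v < v + 1 by omega]
    · have h1 : ¬ (m = v) := by omega
      simp [h1, show ¬ (v < m) by omega, show ¬ (v < m + 1) by omega]

lemma rc_count0 (n : ℕ) (c : ℕ → ℕ) : (rowCore n c).count 0 = 0 := by
  rw [count_eq_zero]
  intro h
  have := rc_mem n c 0 h
  omega

lemma rc_length (n : ℕ) (c : ℕ → ℕ) :
    (rowCore n c).length = ((List.range n).map c).sum := by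
  rw [rowCore, length_flatten, map_map]
  congr 1
  apply map_congr_left
  intro i _
  simp

/-- sum over a range of pointwise differences -/
lemma sum_range_sub (A B : List ℕ) (h : ∀ i, B.getD i 0 ≤ A.getD i 0) (n : ℕ) :
    (((List.range n).map (fun i => A.getD i 0 - B.getD i 0)).sum) + (B.take n).sum
      = (A.take n).sum := by
  induction n with
  | zero => simp
  | succ m ih =>
    rw [range_succ, map_append, sum_append, take_sum_succ, take_sum_succ]
    have := h m
    simp only [map_cons, map_nil, sum_cons, sum_nil]
    omega

def mkRow (prev next : List ℕ) : List ℕ :=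
  rowCore next.length (fun i => next.getD i 0 - prev.getD i 0)

lemma mk_count (prev next : List ℕ) (hlen : prev.length ≤ next.length) (v : ℕ) :
    (mkRow prev next).count (v+1) = next.getD v 0 - prev.getD v 0 := by
  rw [mkRow, rc_count]
  split
  · rfl
  · next hv =>
    rw [getD_eq_default _ _ (by omega : next.length ≤ v),
      getD_eq_default _ _ (by omega : prev.length ≤ v)]

lemma mk_length (prev next : List ℕ) (hlen : prev.length ≤ next.length)
    (h : ∀ i, prev.getD i 0 ≤ next.getD i 0) :
    (mkRow prev next).length + prev.sum = next.sum := by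
  have hs := sum_range_sub next prev h next.length
  rw [take_length, take_of_length_le hlen] at hs
  rw [mkRow, rc_length]
  omega

lemma mk_count0 (prev next : List ℕ) : (mkRow prev next).count 0 = 0 := rc_count0 _ _

lemma mk_sorted (prev next : List ℕ) : (mkRow prev next).Pairwise (· ≤ ·) := rc_sorted _ _

lemma mk_mem (prev next : List ℕ) : ∀ y ∈ mkRow prev next, 1 ≤ y ∧ y ≤ next.length :=
  rc_mem _ _

def canonAux : List ℕ → List (List ℕ)
  | [] => []
  | x :: s => canonAux s ++ [mkRow (sortD s.reverse) (sortD (s.reverse ++ [x]))]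

def canon (l : List ℕ) : List (List ℕ) := canonAux l.reverse

lemma canon_nil : canon [] = [] := rfl

lemma canon_snoc (l : List ℕ) (x : ℕ) :
    canon (l ++ [x]) = canon l ++ [mkRow (sortD l) (sortD (l ++ [x]))] := by
  rw [canon, reverse_append]
  simp only [reverse_cons, reverse_nil, nil_append, singleton_append]
  rw [canonAux]
  rw [reverse_reverse, canon]

lemma pw_snoc (l : List ℕ) (x i : ℕ) :
    (sortD l).getD i 0 ≤ (sortD (l ++ [x])).getD i 0 := by
  rw [sortD_snoc]; exact PW1 (sortD_sorted l) x i

lemma pw2_snoc (l : List ℕ) (x i : ℕ) :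
    (sortD (l ++ [x])).getD (i+1) 0 ≤ (sortD l).getD i 0 := by
  rw [sortD_snoc]; exact PW2 (sortD_sorted l) x i

lemma canon_count : ∀ (l : List ℕ) (v : ℕ),
    ((canon l).flatten).count (v+1) = (sortD l).getD v 0 := by
  intro l
  induction l using List.reverseRecOn with
  | nil => intro v; simp [canon_nil, sortD]
  | append_singleton l x ih =>
    intro v
    rw [canon_snoc, flatten_append]
    simp only [flatten_cons, flatten_nil, append_nil]
    rw [count_append, ih v, mk_count _ _ (by rw [sortD_length, sortD_length, length_append]; omega)]
    have := pw_snoc l x v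
    omega

lemma canon_lengths : ∀ (l : List ℕ), (canon l).map List.length = l := by
  intro l
  induction l using List.reverseRecOn with
  | nil => simp [canon_nil]
  | append_singleton l x ih =>
    rw [canon_snoc, map_append, ih]
    congr 1
    have hlen : (sortD l).length ≤ (sortD (l ++ [x])).length := by
      rw [sortD_length, sortD_length, length_append]; omega
    have := mk_length (sortD l) (sortD (l ++ [x])) hlen (pw_snoc l x)
    rw [sortD_sum, sortD_sum, sum_append] at this
    simp only [map_cons, map_nil, cons.injEq, and_true]
    simp at this
    omega

lemma canon_len (l : List ℕ) : (canon l).length = l.length := by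
  have := congrArg List.length (canon_lengths l)
  simpa using this

lemma canon_rows : ∀ (l : List ℕ), ∀ row ∈ canon l,
    row.Pairwise (· ≤ ·) ∧ ∀ y ∈ row, 0 < y := by
  intro l
  induction l using List.reverseRecOn with
  | nil => simp [canon_nil]
  | append_singleton l x ih =>
    intro row hrow
    rw [canon_snoc] at hrow
    rcases mem_append.mp hrow with h | h
    · exact ih row h
    · simp only [mem_singleton] at h
      subst h
      exact ⟨rc_sorted _ _, fun y hy => (rc_mem _ _ y hy).1⟩

lemma canon_INV : ∀ (l : List ℕ) (j : ℕ), ∀ y ∈ (canon l).getD j [], y ≤ j + 1 := by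
  intro l
  induction l using List.reverseRecOn with
  | nil => simp [canon_nil]
  | append_singleton l x ih =>
    intro j y hy
    rw [canon_snoc] at hy
    rcases lt_or_ge j (canon l).length with hj | hj
    · rw [getD_append _ _ _ _ hj] at hy
      exact ih j y hy
    · rw [getD_append_right _ _ _ _ hj] at hy
      rcases Nat.eq_or_lt_of_le hj with he | hlt
      · rw [← he, Nat.sub_self] at hy
        simp only [getD_cons_zero] at hy
        have h1 := (rc_mem _ _ y hy).2
        have h2 : (sortD (l ++ [x])).length = l.length + 1 := by
          rw [sortD_length, length_append]; simp
        have h3 := canon_len l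
        omega
      · have : j - (canon l).length ≥ 1 := by omega
        obtain ⟨m, hm⟩ : ∃ m, j - (canon l).length = m + 1 := ⟨j - (canon l).length - 1, by omega⟩
        rw [hm] at hy
        simp at hy

lemma canon_INV2 : ∀ (l : List ℕ), (∀ z ∈ l, 0 < z) →
    ∀ j < l.length, (j+1) ∈ (canon l).getD j [] := by
  intro l
  induction l using List.reverseRecOn with
  | nil => simp
  | append_singleton l x ih =>
    intro hpos j hj
    have hpos' : ∀ z ∈ l, 0 < z := fun z hz => hpos z (by simp [hz])
    rw [canon_snoc]
    have h3 := canon_len l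
    rcases lt_or_ge j l.length with hjl | hjl
    · rw [getD_append _ _ _ _ (by omega)]
      exact ih hpos' j hjl
    · have hj' : j = l.length := by rw [length_append] at hj; simp at hj; omega
      subst hj'
      rw [getD_append_right _ _ _ _ (by omega), h3, Nat.sub_self]
      simp only [getD_cons_zero]
      rw [← count_pos_iff]
      have hlen : (sortD l).length ≤ (sortD (l ++ [x])).length := by
        rw [sortD_length, sortD_length, length_append]; omega
      rw [mk_count _ _ hlen]
      have hz : (sortD l).getD l.length 0 = 0 :=
        getD_eq_default _ _ (by rw [sortD_length])
      have hpw : 0 < (sortD (l ++ [x])).getD l.length 0 := by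
        have hlt : l.length < (sortD (l ++ [x])).length := by
          rw [sortD_length, length_append]; simp
        rw [getD_eq_getElem _ _ hlt]
        apply hpos
        have hmem : (sortD (l ++ [x]))[l.length] ∈ sortD (l ++ [x]) := getElem_mem hlt
        exact ((sortD_perm (l ++ [x])).mem_iff).mp hmem
      omega

lemma canon_lat : ∀ (l : List ℕ), IsLatticeWord (((canon l).map List.reverse).flatten) := by
  intro l
  induction l using List.reverseRecOn with
  | nil => intro n i; simp [canon_nil]
  | append_singleton l x ih =>
    rw [canon_snoc, map_append, flatten_append]
    simp only [map_cons, map_nil, flatten_cons, flatten_nil, append_nil]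
    apply latAppend ih
    intro i
    have hlen : (sortD l).length ≤ (sortD (l ++ [x])).length := by
      rw [sortD_length, sortD_length, length_append]; omega
    rw [count_reverse]
    rw [rwCount, rwCount, canon_count, canon_count, mk_count _ _ hlen]
    have h1 := pw_snoc l x (i+1)
    have h2 := pw2_snoc l x i
    omega

lemma revSorted {l : List ℕ} (h : l.Pairwise (· ≤ ·)) : l.reverse.Pairwise (· ≥ ·) := by
  rw [pairwise_reverse]
  exact h

lemma flatten_pos {L : List (List ℕ)} (h : ∀ b ∈ L, ∀ y ∈ b, 0 < y) :
    ∀ y ∈ L.flatten, 0 < y := by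
  intro y hy
  obtain ⟨c, hc, hyc⟩ := mem_flatten.mp hy
  exact h c hc y hyc

lemma UNIQ : ∀ (L : List (List ℕ)),
    (∀ b ∈ L, b.Pairwise (· ≥ ·)) → (∀ b ∈ L, ∀ y ∈ b, 0 < y) →
    IsLatticeWord L.flatten →
    (∀ v, L.flatten.count (v+1) = (sortD (L.map List.length)).getD v 0) →
    L = (canon (L.map List.length)).map List.reverse := by
  intro L
  induction L using List.reverseRecOn with
  | nil => intro _ _ _ _; simp [canon_nil]
  | append_singleton L' b ih =>
    intro hsort hpos hlat hcount
    have hsort' : ∀ c ∈ L', c.Pairwise (· ≥ ·) := fun c hc => hsort c (by simp [hc])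
    have hpos' : ∀ c ∈ L', ∀ y ∈ c, 0 < y := fun c hc => hpos c (by simp [hc])
    have hb : b.Pairwise (· ≥ ·) := hsort b (by simp)
    have hbpos : ∀ y ∈ b, 0 < y := hpos b (by simp)
    have hflat : (L' ++ [b]).flatten = L'.flatten ++ b := by
      rw [flatten_append]; simp
    rw [hflat] at hlat hcount
    have hmap : (L' ++ [b]).map List.length = L'.map List.length ++ [b.length] := by simp
    rw [hmap] at hcount
    set w := L'.flatten with hw
    set α' := L'.map List.length with hα'
    set x := b.length with hx
    set lam' := sortD α' with hlam'
    set lamb := sortD (α' ++ [x]) with hlamb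
    have hlat' : IsLatticeWord w := take_append_lattice hlat
    have hcnt : ∀ v, w.count (v+1) + b.count (v+1) = lamb.getD v 0 := by
      intro v
      have := hcount v
      rw [count_append] at this
      exact this
    have hB : ∀ v, lamb.getD (v+1) 0 ≤ w.count (v+1) := by
      intro v
      have e : v + 1 + 1 = v + 2 := by omega
      have h2 := hcnt (v+1)
      rw [e] at h2
      rcases Nat.eq_zero_or_pos (b.count (v+2)) with hz | hpz
      · have h3 := latticeCount hlat' v
        omega
      · have h1 := S4 hlat hb v hpz
        omega
    have hR : lam'.length = L'.length := by
      rw [hlam', sortD_length, hα', length_map]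
    have hRb : lamb.length = L'.length + 1 := by
      rw [hlamb, sortD_length, length_append, hα', length_map]; simp
    have hwlen : w.length = α'.sum := by
      rw [hw, length_flatten, hα']
    have hLB : ∀ y ∈ w, y ≤ L'.length := LB L' hsort' hlat'
    have hwpos : ∀ y ∈ w, 0 < y := flatten_pos hpos'
    have hcLEall : cLE L'.length w = w.length :=
      cLE_all _ _ (fun y hy => ⟨hwpos y hy, hLB y hy⟩)
    have hlamsum : lamb.sum = α'.sum + x := by
      rw [hlamb, sortD_sum, sum_append]; simp
    have hlamsum' : lam'.sum = α'.sum := by rw [hlam', sortD_sum]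
    have LEMDOWN : ∀ m k, cLE k w + (lamb.take (k+m+1)).sum
        ≤ cLE (k+m) w + (lamb.take (k+1)).sum := by
      intro m
      induction m with
      | zero => intro k; simp
      | succ p ihm =>
        intro k
        have h1 := ihm k
        have h2 : lamb.getD (k+p+1) 0 ≤ w.count (k+p+1) := hB (k+p)
        have h3 := take_sum_succ lamb (k+p+1)
        have h4 := cLE_succ (k+p) w
        have e1 : k + (p+1) + 1 = (k+p+1) + 1 := by omega
        have e2 : k + (p+1) = k + p + 1 := by omega
        rw [e1, e2]
        omega
    have keyUB : ∀ k, k ≤ L'.length → cLE k w + x ≤ (lamb.take (k+1)).sum := by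
      intro k hk
      have h1 := LEMDOWN (L'.length - k) k
      have e1 : k + (L'.length - k) + 1 = L'.length + 1 := by omega
      have e2 : k + (L'.length - k) = L'.length := by omega
      rw [e1, e2] at h1
      have h2 : (lamb.take (L'.length + 1)).sum = lamb.sum := by
        rw [take_of_length_le (by omega)]
      omega
    have hGle : ∀ k, cLE k w ≤ (lam'.take k).sum := by
      intro k
      rcases le_or_gt L'.length k with hk | hk
      · have h1 : (lam'.take k).sum = lam'.sum := by
          rw [take_of_length_le (by omega)]
        have h2 := cLE_le_length k w hwpos
        omega
      · obtain ⟨t, d, he, hsd, hdx, hd⟩ := oi_decomp' (sortD_sorted α') x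
        have heb : lamb = t ++ x :: d := by rw [hlamb, sortD_snoc]; exact he
        have hsd' : lam' = t ++ d := hsd
        rcases le_or_gt k t.length with hkt | hkt
        · have h1 : cLE k w ≤ (((List.range k).map (fun i => lamb.getD i 0)).sum) := by
            apply sum_map_le
            intro i _
            have := hcnt i
            omega
          rw [range_map_getD_sum] at h1
          rw [heb] at h1
          rw [F1 t d x k hkt] at h1
          rw [hsd']
          exact h1
        · obtain ⟨k', rfl⟩ : ∃ k', k = k' + 1 := ⟨k-1, by omega⟩
          have h1 := keyUB (k'+1) (by omega)
          rw [heb] at h1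
          have h2 := F2 t d x (k'+1) (by omega)
          rw [h2] at h1
          rw [hsd']
          omega
    have hGge := claimC L' hsort' hpos' hlat'
    have hGeq : ∀ k, cLE k w = (lam'.take k).sum := by
      intro k
      have h1 := hGge k
      rw [← hα', ← hlam', ← hw] at h1
      have h2 := hGle k
      omega
    have hpt : ∀ v, w.count (v+1) = lam'.getD v 0 := by
      intro v
      have h1 := hGeq v
      have h2 := hGeq (v+1)
      have h3 := cLE_succ v w
      have h4 := take_sum_succ lam' v
      omega
    have hIH := ih hsort' hpos' hlat' hpt
    have hlen : lam'.length ≤ lamb.length := by omega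
    have hperm2 : b ~ (mkRow lam' lamb).reverse := by
      rw [perm_iff_count]
      intro a
      rcases Nat.eq_zero_or_pos a with rfl | hap
      · rw [count_eq_zero.mpr, count_reverse, mk_count0]
        intro hmem
        have := hbpos 0 hmem
        omega
      · obtain ⟨v, rfl⟩ : ∃ v, a = v + 1 := ⟨a-1, by omega⟩
        rw [count_reverse, mk_count _ _ hlen]
        have h1 := hcnt v
        have h2 := hpt v
        have h3 : lam'.getD v 0 ≤ lamb.getD v 0 := pw_snoc α' x v
        omega
    have hbrow : b = (mkRow lam' lamb).reverse :=
      Perm.eq_of_pairwise (fun _ _ _ _ h1 h2 => by omega) hb (revSorted (mk_sorted _ _)) hperm2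
    rw [hmap, canon_snoc, map_append, ← hlam', ← hlamb, ← hIH, hbrow]
    simp

/-! ### assembly lemmas -/

lemma map_length_getD (T : List (List ℕ)) (i : ℕ) :
    (T.getD i []).length = (T.map List.length).getD i 0 := by
  rcases lt_or_ge i T.length with h | h
  · rw [getD_eq_getElem _ _ h, getD_eq_getElem _ _ (by simpa using h)]
    exact (getElem_map _).symm
  · rw [getD_eq_default _ _ h, getD_eq_default _ _ (by simpa using h)]
    simp

lemma map_length_of_rowsMatch {sh : List ℕ} {T : List (List ℕ)} (h : RowsMatch sh T) :
    T.map List.length = sh := by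
  apply List.ext_getElem
  · simpa using h.1
  · intro n h1 h2
    have hn : n < T.length := by simpa using h1
    calc (T.map List.length)[n] = T[n].length := getElem_map _
      _ = (T.getD n []).length := by rw [getD_eq_getElem _ _ hn]
      _ = sh.getD n 0 := h.2 n hn
      _ = sh[n] := getD_eq_getElem _ _ h2

lemma canon_isLR (α : List ℕ) (hα : IsComposition α) :
    IsLR α (canon α) ∧ contents (canon α) = monoOf (sortD α) := by
  have hrows := canon_rows α
  constructor
  · constructor
    · refine ⟨⟨by rw [canon_len], ?_⟩, ?_, ?_⟩
      · intro i _
        rw [map_length_getD, canon_lengths]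
      · intro row hrow
        exact hrows row hrow
      · intro i hi
        have hlen := canon_len α
        have hi' : i + 1 < α.length := by omega
        have hrowi : (canon α).getD i [] ≠ [] := by
          intro hnil
          have h1 : ((canon α).getD i []).length = α.getD i 0 := by
            rw [map_length_getD, canon_lengths]
          have h2 : 0 < α.getD i 0 := by
            rw [getD_eq_getElem _ _ (by omega)]
            exact hα _ (getElem_mem (by omega))
          rw [hnil] at h1
          rw [length_nil] at h1
          omega
        have hhead : ((canon α).getD i []).headI ≤ i + 1 :=
          canon_INV α i _ (headI_mem hrowi)
        have hmem2 : (i + 1 + 1) ∈ (canon α).getD (i+1) [] :=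
          canon_INV2 α hα (i+1) hi'
        have hsorted : ((canon α).getD (i+1) []).Pairwise (· ≤ ·) := by
          have hm : (canon α).getD (i+1) [] ∈ canon α := by
            rw [getD_eq_getElem _ _ (by omega : i + 1 < (canon α).length)]
            exact getElem_mem _
          exact (hrows _ hm).1
        have hlast := mem_le_getLastD hsorted hmem2
        omega
    · exact canon_lat α
  · funext v
    rcases Nat.eq_zero_or_pos v with rfl | hv
    · have h1 : ((canon α).flatten).count 0 = 0 := by
        rw [count_eq_zero]
        intro hmem
        have := flatten_pos (fun b hb => (hrows b hb).2) 0 hmem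
        omega
      simpa [contents, monoOf] using h1
    · obtain ⟨v', rfl⟩ : ∃ v', v = v' + 1 := ⟨v-1, by omega⟩
      show ((canon α).flatten).count (v'+1) = monoOf (sortD α) (v'+1)
      rw [canon_count]
      simp [monoOf]

lemma tableau_blocks {α : List ℕ} {T : List (List ℕ)} (hT : IsLR α T) :
    (∀ b ∈ T.map List.reverse, b.Pairwise (· ≥ ·)) ∧
    (∀ b ∈ T.map List.reverse, ∀ y ∈ b, 0 < y) ∧
    IsLatticeWord ((T.map List.reverse).flatten) ∧
    (T.map List.reverse).map List.length = α := by
  obtain ⟨⟨hmatch, hss, _⟩, hlat⟩ := hT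
  refine ⟨?_, ?_, hlat, ?_⟩
  · intro b hb
    obtain ⟨row, hrow, rfl⟩ := mem_map.mp hb
    exact revSorted (hss row hrow).1
  · intro b hb y hy
    obtain ⟨row, hrow, rfl⟩ := mem_map.mp hb
    exact (hss row hrow).2 y (mem_reverse.mp hy)
  · rw [map_map]
    have : (List.length ∘ List.reverse) = (List.length : List ℕ → ℕ) := by
      funext r; simp
    rw [this]
    exact map_length_of_rowsMatch hmatch


end Helpers

open List

/-- Equation (2.4): in the Schur expansion `r_α = Σ_μ c_{α,μ} s_μ` given by the
Littlewood–Richardson rule, the coefficient of `s_{λ(α)}` is `1` and the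
coefficient of `s_μ` vanishes for every partition `μ` of the same size with
`μ <_lex λ(α)`.  Here `lam` is `λ(α)`: the weakly decreasing rearrangement of
`α`. -/

theorem ribbon_lex_smallest_term
    (α lam : List ℕ)
    (hα : IsComposition α)
    (hlam : IsPartitionList lam)
    (hperm : (↑lam : Multiset ℕ) = (↑α : Multiset ℕ)) :
    lrCoeff α lam = 1 ∧
      ∀ μ : List ℕ, IsPartitionList μ → μ.sum = α.sum →
        LexLtList μ lam → lrCoeff α μ = 0 := by
  have hlam_eq : lam = sortD α :=
    sortD_eq_of_perm_sorted (Multiset.coe_eq_coe.mp hperm) hlam.1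
  constructor
  · have hset : {T : List (List ℕ) | IsLR α T ∧ contents T = monoOf lam} = {canon α} := by
      apply Set.eq_singleton_iff_unique_mem.mpr
      constructor
      · obtain ⟨h1, h2⟩ := canon_isLR α hα
        exact ⟨h1, by rw [hlam_eq]; exact h2⟩
      · intro T hT
        obtain ⟨hLR, hcontents⟩ := hT
        obtain ⟨hs, hp, hl, hmapL⟩ := tableau_blocks hLR
        have hc : ∀ v, ((T.map List.reverse).flatten).count (v+1)
            = (sortD ((T.map List.reverse).map List.length)).getD v 0 := by
          intro v
          rw [hmapL, rwCount]
          have h1 : (T.flatten).count (v+1) = contents T (v+1) := rfl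
          rw [h1, hcontents, ← hlam_eq]
          simp [monoOf]
        have hUNIQ := UNIQ (T.map List.reverse) hs hp hl hc
        rw [hmapL] at hUNIQ
        have h2 := congrArg (List.map List.reverse) hUNIQ
        simpa [map_map, Function.comp] using h2
    unfold lrCoeff
    rw [hset, Set.ncard_singleton]
  · intro μ hμ hsum hlt
    have hset : {T : List (List ℕ) | IsLR α T ∧ contents T = monoOf μ} = (∅ : Set _) := by
      rw [Set.eq_empty_iff_forall_notMem]
      rintro T ⟨hLR, hcontents⟩
      obtain ⟨hs, hp, hl, hmapL⟩ := tableau_blocks hLR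
      obtain ⟨i, hpre, hi⟩ := hlt
      have hcc := claimC (T.map List.reverse) hs hp hl (i+1)
      rw [hmapL, ← hlam_eq] at hcc
      have hcnt : ∀ v, ((T.map List.reverse).flatten).count (v+1) = μ.getD v 0 := by
        intro v
        rw [rwCount]
        have h1 : (T.flatten).count (v+1) = contents T (v+1) := rfl
        rw [h1, hcontents]
        simp [monoOf]
      have hcle : ∀ k, cLE k ((T.map List.reverse).flatten) = (μ.take k).sum := by
        intro k
        rw [cLE, ← range_map_getD_sum μ k]
        congr 1
        apply map_congr_left
        intro j _
        exact hcnt j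
      rw [hcle (i+1)] at hcc
      have heq : (μ.take i).sum = (lam.take i).sum := by
        rw [← range_map_getD_sum μ i, ← range_map_getD_sum lam i]
        congr 1
        apply map_congr_left
        intro j hj
        exact hpre j (mem_range.mp hj)
      have hs1 := take_sum_succ μ i
      have hs2 := take_sum_succ lam i
      omega
    unfold lrCoeff
    rw [hset, Set.ncard_empty]

end RibbonNearEq
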